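/- Let n = 3 and assume β_{12} ≠ 0, β_{13} ≠ 0, β_{23} ≠ 0, and fix x̌ ∈ X_1 with ζ_1(x̌) ≠ 0. Then a family y = (y_i(x))_{x∈X_i, 1≤i≤3} solves the blockwise canonical equations if and only if there exists t ∈ ℝ (namely t = y_1(x̌)) such that y_1(x) = ζ_1(x)·t/ζ_1(x̌) for all x ∈ X_1, y_2(x) = β_{23}ζ_2(x)·t/(β_{13}ζ_1(x̌)) for all x ∈ X_2, and y_3(x) = β_{23}ζ_3(x)·t/(β_{12}ζ_1(x̌)) for all x ∈ X_3. In particular the solution space is one-dimensional. -/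

import Mathlib

open Finset

/-- `μ̃_i`, the mean of the pmf `pt i` on `X i`. -/
noncomputable def muN (X : ℕ → Finset ℝ) (pt : ℕ → ℝ → ℝ) (i : ℕ) : ℝ :=
  ∑ x ∈ X i, pt i x * x

/-- `σ̃²_i`, the variance of the pmf `pt i` on `X i`. -/
noncomputable def sig2N (X : ℕ → Finset ℝ) (pt : ℕ → ℝ → ℝ) (i : ℕ) : ℝ :=
  ∑ x ∈ X i, pt i x * (x - muN X pt i) ^ 2

/-- `ζ_i(x) = π̃_i(x)(x − μ̃_i)/σ̃²_i`. -/
noncomputable def zetaN (X : ℕ → Finset ℝ) (pt : ℕ → ℝ → ℝ) (i : ℕ) (x : ℝ) : ℝ :=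
  pt i x * (x - muN X pt i) / sig2N X pt i

/-- The KNW closed-form function for the index sequence `σ(1), …, σ(m)`:
`Π(x) = ∏_{i=1}^m π_{σ(i)}(x_{σ(i)})
  + ∑_{i=2}^m [ ζ_{σ(i)}(x_{σ(i)}) ∑_{j=1}^{i−1} (∏_{k≤i−1, k≠j} π̂_{σ(k)}(x_{σ(k)}))
      β_{σ(i)σ(j)} ζ_{σ(j)}(x_{σ(j)}) ] ∏_{k=i+1}^m π_{σ(k)}(x_{σ(k)})`. -/
noncomputable def knwClosedF (X : ℕ → Finset ℝ) (π πh pt : ℕ → ℝ → ℝ) (β : ℕ → ℕ → ℝ)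
    (m : ℕ) (σ : ℕ → ℕ) (x : ℕ → ℝ) : ℝ :=
  (∏ i ∈ Finset.Icc 1 m, π (σ i) (x (σ i))) +
    ∑ i ∈ Finset.Icc 2 m,
      (zetaN X pt (σ i) (x (σ i)) *
          ∑ j ∈ Finset.Icc 1 (i - 1),
            (∏ k ∈ (Finset.Icc 1 (i - 1)).erase j, πh (σ k) (x (σ k))) *
              β (σ i) (σ j) * zetaN X pt (σ j) (x (σ j))) *
        ∏ k ∈ Finset.Icc (i + 1) m, π (σ k) (x (σ k))

lemma exists_zeta_ne (X : ℕ → Finset ℝ) (pt : ℕ → ℝ → ℝ) (i : ℕ)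
    (hnn : ∀ x ∈ X i, 0 ≤ pt i x)
    (hnd : 1 < ((X i).filter fun x => pt i x ≠ 0).card) :
    ∃ x ∈ X i, zetaN X pt i x ≠ 0 := by
  obtain ⟨a, ha, b, hb, hab⟩ := Finset.one_lt_card.1 hnd
  simp only [Finset.mem_filter] at ha hb
  have hc : ∃ c ∈ X i, pt i c ≠ 0 ∧ c ≠ muN X pt i := by
    by_cases h : a = muN X pt i
    · exact ⟨b, hb.1, hb.2, fun hh => hab (h.trans hh.symm)⟩
    · exact ⟨a, ha.1, ha.2, h⟩
  obtain ⟨c, hcX, hc0, hcm⟩ := hc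
  have hsig : 0 < sig2N X pt i := by
    apply Finset.sum_pos' (fun x hx => mul_nonneg (hnn x hx) (sq_nonneg _))
    refine ⟨c, hcX, ?_⟩
    have h1 : 0 < pt i c := lt_of_le_of_ne (hnn c hcX) (Ne.symm hc0)
    have h2 : (0:ℝ) < (c - muN X pt i) ^ 2 := by
      have h0 := sub_ne_zero.2 hcm; positivity
    exact mul_pos h1 h2
  refine ⟨c, hcX, ?_⟩
  unfold zetaN
  exact div_ne_zero (mul_ne_zero hc0 (sub_ne_zero.2 hcm)) (ne_of_gt hsig)

theorem stmt15
    (X : ℕ → Finset ℝ) (π pt : ℕ → ℝ → ℝ) (β : ℕ → ℕ → ℝ)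
    (hXne : ∀ i ∈ Finset.Icc 1 3, (X i).Nonempty)
    (hπ_pos : ∀ i ∈ Finset.Icc 1 3, ∀ x ∈ X i, 0 < π i x)
    (hπ_sum : ∀ i ∈ Finset.Icc 1 3, ∑ x ∈ X i, π i x = 1)
    (hpt_nn : ∀ i ∈ Finset.Icc 1 3, ∀ x ∈ X i, 0 ≤ pt i x)
    (hpt_sum : ∀ i ∈ Finset.Icc 1 3, ∑ x ∈ X i, pt i x = 1)
    (hpt_nd : ∀ i ∈ Finset.Icc 1 3, 1 < ((X i).filter fun x => pt i x ≠ 0).card)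
    (hβ_symm : ∀ i ∈ Finset.Icc 1 3, ∀ j ∈ Finset.Icc 1 3, β i j = β j i)
    (hβ12 : β 1 2 ≠ 0) (hβ13 : β 1 3 ≠ 0) (hβ23 : β 2 3 ≠ 0)
    (xc : ℝ) (hxc : xc ∈ X 1) (hζxc : zetaN X pt 1 xc ≠ 0)
    (y : ℕ → ℝ → ℝ) :
    -- `y` solves the blockwise canonical equations …
    (∀ i ∈ Finset.Icc 1 3, ∀ j ∈ Finset.Icc 1 3, ∀ k ∈ Finset.Icc 1 3,
      i ≠ j → i ≠ k → j ≠ k →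
      ∀ xi ∈ X i, ∀ xj ∈ X j, ∀ xk ∈ X k,
        zetaN X pt j xj * β j k * y i xi = zetaN X pt i xi * β i k * y j xj ∧
        zetaN X pt k xk * β j k * y i xi = zetaN X pt i xi * β i j * y k xk) ↔
      -- … iff `y` has the one-parameter closed form (with parameter `t = y_1(x̌)`)
      (∃ t : ℝ, t = y 1 xc ∧
        (∀ x ∈ X 1, y 1 x = zetaN X pt 1 x * t / zetaN X pt 1 xc) ∧
        (∀ x ∈ X 2, y 2 x = β 2 3 * zetaN X pt 2 x * t / (β 1 3 * zetaN X pt 1 xc)) ∧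
        (∀ x ∈ X 3, y 3 x = β 2 3 * zetaN X pt 3 x * t / (β 1 2 * zetaN X pt 1 xc)))  := by
  have m1 : (1:ℕ) ∈ Finset.Icc 1 3 := by decide
  have m2 : (2:ℕ) ∈ Finset.Icc 1 3 := by decide
  have m3 : (3:ℕ) ∈ Finset.Icc 1 3 := by decide
  have s21 : β 2 1 = β 1 2 := hβ_symm 2 m2 1 m1
  have s31 : β 3 1 = β 1 3 := hβ_symm 3 m3 1 m1
  have s32 : β 3 2 = β 2 3 := hβ_symm 3 m3 2 m2
  obtain ⟨x2, hx2⟩ := hXne 2 m2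
  obtain ⟨x3, hx3⟩ := hXne 3 m3
  obtain ⟨x2s, hx2s, hz2⟩ := exists_zeta_ne X pt 2 (hpt_nn 2 m2) (hpt_nd 2 m2)
  constructor
  · intro h
    refine ⟨y 1 xc, rfl, ?_, ?_, ?_⟩
    · intro x hx
      have eq := (h 2 m2 1 m1 3 m3 (by decide) (by decide) (by decide)
        x2s hx2s x hx x3 hx3).1
      have eqc := (h 2 m2 1 m1 3 m3 (by decide) (by decide) (by decide)
        x2s hx2s xc hxc x3 hx3).1
      have key : zetaN X pt 2 x2s * β 2 3 * (y 1 x * zetaN X pt 1 xc) =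
          zetaN X pt 2 x2s * β 2 3 * (zetaN X pt 1 x * y 1 xc) := by
        linear_combination zetaN X pt 1 x * eqc - zetaN X pt 1 xc * eq
      have key2 := mul_left_cancel₀ (mul_ne_zero hz2 hβ23) key
      field_simp
      linarith [key2]
    · intro x hx
      have eq := (h 1 m1 2 m2 3 m3 (by decide) (by decide) (by decide)
        xc hxc x hx x3 hx3).1
      field_simp
      linear_combination -eq
    · intro x hx
      have eq := (h 1 m1 2 m2 3 m3 (by decide) (by decide) (by decide)
        xc hxc x2 hx2 x hx).2
      field_simp
      linear_combination -eq
  · rintro ⟨t, ht, h1, h2, h3⟩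
    intro i hi j hj k hk hij hik hjk xi hxi xj hxj xk hxk
    simp only [Finset.mem_Icc] at hi hj hk
    obtain ⟨hi1, hi2⟩ := hi
    obtain ⟨hj1, hj2⟩ := hj
    obtain ⟨hk1, hk2⟩ := hk
    interval_cases i <;> interval_cases j <;> interval_cases k <;>
      first
      | exact absurd rfl hij
      | exact absurd rfl hik
      | exact absurd rfl hjk
      | (constructor <;>
          · try simp only [s21, s31, s32]
            first
            | (rw [h1 xi hxi]) | skip
            first
            | (rw [h2 xi hxi]) | skip
            first
            | (rw [h3 xi hxi]) | skip
            first
            | (rw [h1 xj hxj]) | skip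
            first
            | (rw [h2 xj hxj]) | skip
            first
            | (rw [h3 xj hxj]) | skip
            first
            | (rw [h1 xk hxk]) | skip
            first
            | (rw [h2 xk hxk]) | skip
            first
            | (rw [h3 xk hxk]) | skip
            field_simp)
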